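/- Let -1 < s < 1. There exists a constant c = c(s) > 0 such that for every real κ ≥ 1 and every ξ ∈ ℝ with |ξ| ≥ κ, ∑_{k=1}^∞ (κ 2^k)^{2s} w(ξ; κ 2^k) ≥ c |ξ|^{2s}. -/

import Mathlib

open Real

/-- The multiplier `w(ξ; m) = 3m²ξ² / (4(ξ² + m²)(ξ² + 4m²))`. -/
noncomputable def w (ξ m : ℝ) : ℝ :=
  3 * m ^ 2 * ξ ^ 2 / (4 * (ξ ^ 2 + m ^ 2) * (ξ ^ 2 + 4 * m ^ 2))

lemma w_nonneg (ξ m : ℝ) : 0 ≤ w ξ m := by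
  unfold w; positivity

lemma pow_rpow_comm (n : ℕ) (y : ℝ) : ((2:ℝ) ^ n) ^ y = ((2:ℝ) ^ y) ^ n := by
  rw [← Real.rpow_natCast 2 n, ← Real.rpow_mul (by norm_num), mul_comm,
    Real.rpow_mul (by norm_num), Real.rpow_natCast]

lemma w_upper (ξ m : ℝ) (hm : 0 < m) : w ξ m ≤ 3 * ξ ^ 2 / (16 * m ^ 2) := by
  have h1 : w ξ m ≤ 3 * m ^ 2 * ξ ^ 2 / (16 * m ^ 4) := by
    unfold w
    apply div_le_div_of_nonneg_left (by positivity) (by positivity)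
    nlinarith [sq_nonneg ξ, sq_nonneg m, sq_nonneg (ξ * m), sq_nonneg (ξ ^ 2)]
  have h2 : 3 * m ^ 2 * ξ ^ 2 / (16 * m ^ 4) = 3 * ξ ^ 2 / (16 * m ^ 2) := by
    field_simp
  linarith [h1, h2.le, h2.ge]

lemma summable_terms (s κ ξ : ℝ) (hs₂ : s < 1) (hκ : 1 ≤ κ) :
    Summable (fun k : ℕ => (κ * 2 ^ (k + 1)) ^ (2 * s) * w ξ (κ * 2 ^ (k + 1))) := by
  have hκ0 : (0:ℝ) < κ := lt_of_lt_of_le one_pos hκ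
  set r : ℝ := (2:ℝ) ^ (2 * s - 2) with hr
  have hr0 : 0 ≤ r := Real.rpow_nonneg (by norm_num) _
  have hr1 : r < 1 :=
    Real.rpow_lt_one_of_one_lt_of_neg (by norm_num) (by linarith)
  have hg : Summable (fun k : ℕ => 3 * ξ ^ 2 / 16 * (r * r ^ k)) := by
    apply Summable.mul_left
    exact (summable_geometric_of_lt_one hr0 hr1).mul_left r
  apply Summable.of_nonneg_of_le _ _ hg
  · intro k
    have := w_nonneg ξ (κ * 2 ^ (k + 1))
    positivity
  · intro k
    set m : ℝ := κ * 2 ^ (k + 1) with hmdef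
    have hm : 0 < m := by positivity
    have hw := w_upper ξ m hm
    have hterm : m ^ (2 * s) * w ξ m ≤ m ^ (2 * s) * (3 * ξ ^ 2 / (16 * m ^ 2)) :=
      mul_le_mul_of_nonneg_left hw (Real.rpow_nonneg hm.le _)
    have heq : m ^ (2 * s) * (3 * ξ ^ 2 / (16 * m ^ 2)) =
        3 * ξ ^ 2 / 16 * (κ ^ (2 * s - 2) * r ^ (k + 1)) := by
      have h1 : m ^ (2 * s - 2) = κ ^ (2 * s - 2) * r ^ (k + 1) := by
        rw [hmdef, Real.mul_rpow hκ0.le (by positivity), hr, pow_rpow_comm]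
      have h2 : m ^ (2 * s - 2) = m ^ (2 * s) / m ^ 2 := by
        rw [show (2 * s - 2 : ℝ) = 2 * s - (2:ℕ) by norm_num,
          Real.rpow_sub hm, Real.rpow_natCast]
      have hm2 : (0:ℝ) < m ^ 2 := by positivity
      rw [← h1, h2]
      field_simp
    have hκle : κ ^ (2 * s - 2) ≤ 1 :=
      Real.rpow_le_one_of_one_le_of_nonpos hκ (by linarith)
    have hrpow : r ^ (k + 1) = r * r ^ k := by ring
    have hfin : 3 * ξ ^ 2 / 16 * (κ ^ (2 * s - 2) * r ^ (k + 1)) ≤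
        3 * ξ ^ 2 / 16 * (r * r ^ k) := by
      rw [← hrpow]
      have h1 : κ ^ (2 * s - 2) * r ^ (k + 1) ≤ 1 * r ^ (k + 1) :=
        mul_le_mul_of_nonneg_right hκle (pow_nonneg hr0 _)
      have h2 : (0:ℝ) ≤ 3 * ξ ^ 2 / 16 := by positivity
      nlinarith
    calc m ^ (2 * s) * w ξ m ≤ m ^ (2 * s) * (3 * ξ ^ 2 / (16 * m ^ 2)) := hterm
      _ = 3 * ξ ^ 2 / 16 * (κ ^ (2 * s - 2) * r ^ (k + 1)) := heq
      _ ≤ 3 * ξ ^ 2 / 16 * (r * r ^ k) := hfin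

lemma key_term (s κ ξ : ℝ) (hs₁ : -1 < s) (hs₂ : s < 1) (hκ : 1 ≤ κ) (hξ : κ ≤ |ξ|) :
    ∃ k : ℕ, 3 / 1360 * |ξ| ^ (2 * s) ≤
      (κ * 2 ^ (k + 1)) ^ (2 * s) * w ξ (κ * 2 ^ (k + 1)) := by
  have hκ0 : (0:ℝ) < κ := lt_of_lt_of_le one_pos hκ
  set x : ℝ := |ξ| with hxdef
  have hx1 : 1 ≤ x := le_trans hκ hξ
  have hx0 : 0 < x := lt_of_lt_of_le one_pos hx1
  -- find minimal n with x < κ * 2 ^ n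
  have hex : ∃ n : ℕ, x < κ * 2 ^ n := by
    obtain ⟨n, hn⟩ := pow_unbounded_of_one_lt (x / κ) (by norm_num : (1:ℝ) < 2)
    exact ⟨n, by rwa [div_lt_iff₀ hκ0, mul_comm] at hn⟩
  classical
  set n := Nat.find hex with hndef
  have hn : x < κ * 2 ^ n := Nat.find_spec hex
  have hn0 : n ≠ 0 := by
    intro h
    have := hn
    rw [h] at this
    simp at this
    linarith
  obtain ⟨k, hk⟩ : ∃ k, n = k + 1 := ⟨n - 1, (Nat.succ_pred_eq_of_pos (Nat.pos_of_ne_zero hn0)).symm⟩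
  have hklt : ¬ (x < κ * 2 ^ k) := Nat.find_min hex (by omega)
  push_neg at hklt
  refine ⟨k, ?_⟩
  set m : ℝ := κ * 2 ^ (k + 1) with hmdef
  have hm : 0 < m := by positivity
  have hxm : x ≤ m := by rw [hmdef, ← hk]; exact hn.le
  have hm2x : m ≤ 2 * x := by
    rw [hmdef]
    have : κ * 2 ^ (k + 1) = 2 * (κ * 2 ^ k) := by ring
    rw [this]
    linarith
  have hξ2 : ξ ^ 2 = x ^ 2 := (sq_abs ξ).symm
  -- lower bound on w
  have hwlow : 3 / 340 ≤ w ξ m := by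
    unfold w
    rw [hξ2]
    have hd : 0 < 4 * (x ^ 2 + m ^ 2) * (x ^ 2 + 4 * m ^ 2) := by positivity
    rw [div_le_div_iff₀ (by norm_num) hd]
    have hm2 : m ^ 2 ≤ 4 * x ^ 2 := by nlinarith
    have hx2 : x ^ 2 ≤ m ^ 2 := by nlinarith
    nlinarith [sq_nonneg x, sq_nonneg m, mul_le_mul hm2 hm2 (by positivity) (by positivity),
      mul_le_mul hx2 hx2 (by positivity) (by positivity), mul_le_mul_of_nonneg_right hm2 (sq_nonneg x), mul_le_mul_of_nonneg_right hx2 (sq_nonneg x)]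
  -- lower bound on m ^ (2s)
  have hmlow : x ^ (2 * s) / 4 ≤ m ^ (2 * s) := by
    rcases le_or_gt 0 s with hs | hs
    · have h1 : x ^ (2 * s) ≤ m ^ (2 * s) :=
        Real.rpow_le_rpow hx0.le hxm (by linarith)
      have h2 : 0 ≤ x ^ (2 * s) := Real.rpow_nonneg hx0.le _
      linarith
    · have h1 : m ^ (2 * s) ≥ (2 * x) ^ (2 * s) := by
        apply Real.rpow_le_rpow_of_nonpos hm hm2x (by linarith)
      have h2 : (2 * x) ^ (2 * s) = (2:ℝ) ^ (2 * s) * x ^ (2 * s) :=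
        Real.mul_rpow (by norm_num) hx0.le
      have h3 : (2:ℝ) ^ (-2:ℝ) ≤ (2:ℝ) ^ (2 * s) :=
        Real.rpow_le_rpow_of_exponent_le (by norm_num) (by linarith)
      have h4 : (2:ℝ) ^ (-2:ℝ) = 1 / 4 := by
        rw [show (-2:ℝ) = ((-2:ℤ):ℝ) by norm_num, Real.rpow_intCast]
        norm_num
      have h5 : 0 ≤ x ^ (2 * s) := Real.rpow_nonneg hx0.le _
      have h6 := mul_le_mul_of_nonneg_right h3 h5
      rw [h4] at h6
      linarith
  have h5 : 0 ≤ x ^ (2 * s) := Real.rpow_nonneg hx0.le _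
  have := mul_le_mul hwlow hmlow (by linarith) (le_trans (by norm_num) hwlow)
  calc 3 / 1360 * x ^ (2 * s) = 3 / 340 * (x ^ (2 * s) / 4) := by ring
    _ ≤ w ξ m * m ^ (2 * s) := this
    _ = m ^ (2 * s) * w ξ m := mul_comm _ _

/-- Let `-1 < s < 1`. There exists `c = c(s) > 0` such that for every real
`κ ≥ 1` and every `ξ ∈ ℝ` with `|ξ| ≥ κ`,
`∑_{k=1}^∞ (κ 2^k)^{2s} w(ξ; κ 2^k) ≥ c |ξ|^{2s}`. -/
theorem stmt_11 (s : ℝ) (hs₁ : -1 < s) (hs₂ : s < 1) :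
    ∃ c : ℝ, 0 < c ∧ ∀ κ : ℝ, 1 ≤ κ → ∀ ξ : ℝ, κ ≤ |ξ| →
      c * |ξ| ^ (2 * s) ≤ ∑' k : ℕ, (κ * 2 ^ (k + 1)) ^ (2 * s) * w ξ (κ * 2 ^ (k + 1)) := by
  refine ⟨3 / 1360, by norm_num, ?_⟩
  intro κ hκ ξ hξ
  have hκ0 : (0:ℝ) < κ := lt_of_lt_of_le one_pos hκ
  obtain ⟨k, hk⟩ := key_term s κ ξ hs₁ hs₂ hκ hξ
  have hsum := summable_terms s κ ξ hs₂ hκ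
  have hle : (κ * 2 ^ (k + 1)) ^ (2 * s) * w ξ (κ * 2 ^ (k + 1)) ≤
      ∑' j : ℕ, (κ * 2 ^ (j + 1)) ^ (2 * s) * w ξ (κ * 2 ^ (j + 1)) := by
    apply Summable.le_tsum hsum k
    intro j _
    have := w_nonneg ξ (κ * 2 ^ (j + 1))
    positivity
  linarith
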